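/- arXiv:2001.04887 — 2 statements merged into one kernel-verified Lean document; each statement's English description precedes it below -/
import Mathlib

section
/- Let S be a stabilizer group on n qubits with 2^r elements ε_j E(a_j, b_j) (ε_j ∈ {±1}, j = 1,…,2^r). Suppose: (1) for every j, w_H(a_j) is even; and (2) for every j with a_j ≠ 0 there exists a linear subspace A_j ⊆ F_2^n with dim A_j = w_H(a_j)/2 such that every z ∈ A_j satisfies z ⪯ a_j, y z^T = 0 for all y, z ∈ A_j (including y = z), and i^{w_H(z)} E(0,z) ∈ S for every z ∈ A_j. Then T^{⊗n} Π_S (T^{⊗n})† = Π_S, i.e., transversal T preserves the code space V(S) and hence induces a logical operation on it. -/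
open Matrix BigOperators

section Binary

variable {ι : Type*} [Fintype ι] [DecidableEq ι]

/-- Hamming weight of a binary vector. -/
def wH (x : ι → ZMod 2) : ℕ := (Finset.univ.filter fun j => x j = 1).card

/-- `supportLE y x` means `supp(y) ⊆ supp(x)`, i.e. `y ⪯ x`. -/
def supportLE (y x : ι → ZMod 2) : Prop := ∀ j, y j = 1 → x j = 1

instance (x : ι → ZMod 2) : DecidablePred (fun y : ι → ZMod 2 => supportLE y x) :=
  fun _ => inferInstanceAs (Decidable (∀ j, _ = 1 → x j = 1))

/-- The mod-2 inner product `x yᵀ = ∑ j, x j * y j`. -/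
def binInner (x y : ι → ZMod 2) : ZMod 2 := ∑ j, x j * y j

/-- The dual code `C^⊥ = {y : x yᵀ = 0 for all x ∈ C}`. -/
def dualCode (C : Submodule (ZMod 2) (ι → ZMod 2)) : Submodule (ZMod 2) (ι → ZMod 2) where
  carrier := { y | ∀ x ∈ C, binInner x y = 0 }
  add_mem' := by
    intro a b ha hb x hx
    have h : binInner x (a + b) = binInner x a + binInner x b := by
      simp [binInner, mul_add, Finset.sum_add_distrib]
    rw [h, ha x hx, hb x hx, add_zero]
  zero_mem' := by
    intro x hx
    simp [binInner]
  smul_mem' := by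
    intro c a ha x hx
    have h : binInner x (c • a) = c * binInner x a := by
      simp only [binInner, Pi.smul_apply, smul_eq_mul, Finset.mul_sum]
      exact Finset.sum_congr rfl fun j _ => by ring
    rw [h, ha x hx, mul_zero]

/-- A CSS-T pair of binary linear codes: `C₂ ⊆ C₁`, every codeword of `C₂` has even
weight, and for each `x ∈ C₂` there is a self-dual code in `C₁^⊥`, of dimension
`w_H(x)/2`, supported on `x`. -/
def CSST (C₁ C₂ : Submodule (ZMod 2) (ι → ZMod 2)) : Prop :=
  C₂ ≤ C₁ ∧
  (∀ x ∈ C₂, Even (wH x)) ∧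
  (∀ x ∈ C₂, ∃ Cx : Submodule (ZMod 2) (ι → ZMod 2),
    Cx ≤ dualCode C₁ ∧
    2 * Module.finrank (ZMod 2) Cx = wH x ∧
    (∀ z ∈ Cx, supportLE z x) ∧
    (∀ y ∈ Cx, ∀ z ∈ Cx, binInner y z = 0))

/-- A family of rows is triorthogonal if all pairs and triples of distinct rows have
even overlap. -/
def Triorthogonal {p : ℕ} (g : Fin p → ι → ZMod 2) : Prop :=
  (∀ a b : Fin p, a < b → Even (wH (g a * g b))) ∧
  (∀ a b c : Fin p, a < b → b < c → Even (wH (g a * g b * g c)))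

end Binary

/-- Binary vectors of length `n`. -/
abbrev V (n : ℕ) := Fin n → ZMod 2

/-- The Hermitian `n`-qubit Pauli matrix
`E(a,b) = ⊗_j i^{a_j b_j} X^{a_j} Z^{b_j}`, written entrywise:
`E(a,b)[u,v] = i^{∑ a_j b_j} · 1[u = v ⊕ a] · (−1)^{∑ b_j v_j}`. -/
def PauliE {n : ℕ} (a b : V n) : Matrix (V n) (V n) ℂ :=
  Matrix.of fun u v =>
    Complex.I ^ (∑ j, (a j).val * (b j).val) *
      (if u = v + a then 1 else 0) *
      (-1 : ℂ) ^ (∑ j, (b j).val * (v j).val)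

/-- The transversal `T` gate `T^{⊗n}`, where `T = diag(1, e^{iπ/4})`; it is the diagonal
matrix whose entry at `v` is `e^{iπ w_H(v)/4}`. -/
noncomputable def transT (n : ℕ) : Matrix (V n) (V n) ℂ :=
  Matrix.diagonal fun v : V n => Complex.exp ((Real.pi : ℂ) * Complex.I / 4) ^ wH v

/-- `ε` is a sign `±1`. -/
def IsSign (ε : ℂ) : Prop := ε = 1 ∨ ε = -1

/-- A stabilizer group on `n` qubits, given as the finite set of its elements:
each element is `±E(a,b)`, the set is closed under multiplication, abelian,
nonempty (hence contains the identity), and does not contain `−I`. -/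
def IsStabilizer (n : ℕ) (S : Finset (Matrix (V n) (V n) ℂ)) : Prop :=
  S.Nonempty ∧
  (∀ g ∈ S, ∃ (ε : ℂ) (a b : V n), IsSign ε ∧ g = ε • PauliE a b) ∧
  (∀ g ∈ S, ∀ h ∈ S, g * h ∈ S) ∧
  (∀ g ∈ S, ∀ h ∈ S, g * h = h * g) ∧
  (-1 : Matrix (V n) (V n) ℂ) ∉ S

/-- The code projector `Π_S = |S|⁻¹ ∑_{g ∈ S} g  (= 2^{−r} ∑_j ε_j E(a_j,b_j))`. -/
noncomputable def stabProj {n : ℕ} (S : Finset (Matrix (V n) (V n) ℂ)) :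
    Matrix (V n) (V n) ℂ :=
  (S.card : ℂ)⁻¹ • ∑ g ∈ S, g

section Aux

lemma zval_eq (x : ZMod 2) : (if x = 1 then (1:ℕ) else 0) = x.val := by revert x; decide

lemma wH_eq_sum {n : ℕ} (x : V n) : wH x = ∑ j, (x j).val := by
  simp only [wH, Finset.card_filter]
  exact Finset.sum_congr rfl fun j _ => zval_eq (x j)

lemma zmod_add_val (x y : ZMod 2) : ((x + y).val + 2 * (x * y).val = x.val + y.val) := by
  revert x y; decide

lemma wH_add_identity {n : ℕ} (x y : V n) : wH (x + y) + 2 * wH (x * y) = wH x + wH y := by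
  simp only [wH_eq_sum, Finset.mul_sum, ← Finset.sum_add_distrib]
  exact Finset.sum_congr rfl fun j _ => zmod_add_val (x j) (y j)

lemma natCast_val_zmod (x : ZMod 2) : ((x.val : ZMod 2)) = x := by revert x; decide

lemma natCast_wH {n : ℕ} (x : V n) : ((wH x : ZMod 2)) = ∑ j, x j := by
  rw [wH_eq_sum, Nat.cast_sum]
  exact Finset.sum_congr rfl fun j _ => natCast_val_zmod (x j)

lemma even_of_cast_zero {m : ℕ} (h : (m : ZMod 2) = 0) : Even m := by
  obtain ⟨c, hc⟩ := (ZMod.natCast_eq_zero_iff m 2).1 h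
  exact ⟨c, by omega⟩

lemma zmul_self (x : ZMod 2) : x * x = x := by revert x; decide

lemma even_wH_mul {n : ℕ} {y z : V n} (h : binInner y z = 0) : Even (wH (y * z)) := by
  apply even_of_cast_zero
  rw [natCast_wH]
  rw [binInner] at h
  simpa using h

lemma even_wH_of_self {n : ℕ} {z : V n} (h : binInner z z = 0) : Even (wH z) := by
  have := even_wH_mul h
  have hz : z * z = z := funext fun j => zmul_self (z j)
  rwa [hz] at this

lemma neg_one_pow_mod (m : ℕ) : ((-1:ℂ))^m = (-1)^(m % 2) := by
  conv_lhs => rw [← Nat.div_add_mod m 2]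
  rw [pow_add, pow_mul]
  norm_num

lemma neg_one_pow_congr' {m m' : ℕ} (h : (m : ZMod 2) = (m' : ZMod 2)) :
    ((-1:ℂ))^m = (-1)^m' := by
  rw [neg_one_pow_mod m, neg_one_pow_mod m']
  congr 1
  exact (ZMod.natCast_eq_natCast_iff m m' 2).1 h

lemma natCast_val_mul (x y : ZMod 2) : (((x.val * y.val : ℕ)) : ZMod 2) = x * y := by
  revert x y; decide

lemma zmodsum (f : ZMod 2 → ℂ) : ∑ x : ZMod 2, f x = f 0 + f 1 := by
  have : (Finset.univ : Finset (ZMod 2)) = {0, 1} := by decide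
  rw [this, Finset.sum_insert (by decide), Finset.sum_singleton]

/-- factorization of a sum over `{v ⪯ a}` of a coordinatewise product -/
lemma sum_prod_support {n : ℕ} (a : V n) (g : Fin n → ZMod 2 → ℂ)
    (hg : ∀ j, a j = 0 → g j 1 = 0) :
    ∑ v ∈ Finset.univ.filter (fun v : V n => supportLE v a), ∏ j, g j (v j)
      = ∏ j, (g j 0 + g j 1) := by
  have h1 : ∑ v : V n, ∏ j, g j (v j) = ∏ j, (g j 0 + g j 1) := by
    rw [← Fintype.prod_sum g]
    exact Finset.prod_congr rfl fun j _ => zmodsum (g j)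
  rw [← h1]
  apply Finset.sum_filter_of_ne
  intro v _ hv
  intro j hj1
  by_contra hj2
  apply hv
  apply Finset.prod_eq_zero (Finset.mem_univ j)
  have haj : a j = 0 := by
    have h2 : ∀ x : ZMod 2, x ≠ 1 → x = 0 := by decide
    exact h2 _ hj2
  rw [hj1]
  exact hg j haj

lemma wH_zero {n : ℕ} : wH (0 : V n) = 0 := by
  simp [wH, Finset.filter_eq_empty_iff]

lemma core {n : ℕ} (a u : V n) (A : Submodule (ZMod 2) (V n))
    (hdim : 2 * Module.finrank (ZMod 2) A = wH a)
    (hsupp : ∀ z ∈ A, supportLE z a)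
    (horth : ∀ y ∈ A, ∀ z ∈ A, binInner y z = 0)
    (hval : ∀ z ∈ A, Complex.I ^ wH z * (-1:ℂ) ^ (∑ j, (z j).val * (u j).val) = 1) :
    (-Complex.I) ^ wH (a * u) = (-Complex.I) ^ Module.finrank (ZMod 2) A := by
  classical
  haveI : Fintype A := Fintype.ofFinite A
  set k := Module.finrank (ZMod 2) A with hk
  have hcardA : Fintype.card A = 2 ^ k := by
    simpa [ZMod.card] using Module.card_eq_pow_finrank (K := ZMod 2) (V := A)
  set e : V n → V n → ℕ := fun z v => ∑ j, (z j).val * (v j).val with he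
  set ψ : V n → V n → ℂ := fun z v => Complex.I ^ wH z * (-1:ℂ) ^ e z v with hψ
  have heven : ∀ z ∈ A, Even (wH z) := fun z hz => even_wH_of_self (horth z hz z hz)
  have hIsq : ∀ (w : ℕ), Even w → Complex.I ^ w * Complex.I ^ w = 1 := by
    intro w hw
    obtain ⟨m, hm⟩ := hw
    rw [← pow_add, hm]
    have : m + m + (m + m) = 4 * m := by ring
    rw [this, pow_mul]
    norm_num [pow_succ, Complex.I_sq]
  have hpm : ∀ z ∈ A, ∀ v, ψ z v = 1 ∨ ψ z v = -1 := by
    intro z hz v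
    obtain ⟨m, hm⟩ := heven z hz
    have hI : Complex.I ^ wH z = (-1:ℂ) ^ m := by
      rw [hm, ← two_mul, pow_mul, Complex.I_sq]
    rw [hψ]
    simp only
    rw [hI, ← pow_add]
    rcases Nat.even_or_odd (m + e z v) with h | h
    · left; exact h.neg_one_pow
    · right; exact h.neg_one_pow
  have hcast : ∀ (w v : V n), ((e w v : ℕ) : ZMod 2) = ∑ j, w j * v j := by
    intro w v
    rw [he]
    push_cast
    exact Finset.sum_congr rfl fun j _ => by rw [natCast_val_zmod, natCast_val_zmod]
  have hhom : ∀ y ∈ A, ∀ z ∈ A, ∀ v, ψ (y + z) v = ψ y v * ψ z v := by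
    intro y hy z hz v
    have h1 : Complex.I ^ (wH y + wH z) = Complex.I ^ wH (y + z) := by
      have hid := wH_add_identity y z
      have hev : Even (wH (y * z)) := even_wH_mul (horth y hy z hz)
      obtain ⟨m, hm⟩ := hev
      calc Complex.I ^ (wH y + wH z) = Complex.I ^ (wH (y+z) + 2 * wH (y*z)) := by rw [hid]
        _ = Complex.I ^ wH (y+z) * (Complex.I ^ 2) ^ wH (y*z) := by rw [pow_add, pow_mul]
        _ = Complex.I ^ wH (y+z) * ((-1:ℂ)) ^ wH (y*z) := by rw [Complex.I_sq]
        _ = Complex.I ^ wH (y+z) := by rw [hm, ← two_mul, pow_mul]; norm_num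
    have h2 : ((-1:ℂ)) ^ e (y + z) v = (-1:ℂ) ^ (e y v + e z v) := by
      apply neg_one_pow_congr'
      rw [hcast, Nat.cast_add, hcast, hcast, ← Finset.sum_add_distrib]
      exact Finset.sum_congr rfl fun j _ => by rw [Pi.add_apply, add_mul]
    rw [hψ]
    simp only
    rw [h2, ← h1, pow_add, pow_add]
    ring
  have hsum0 : ∀ v, (¬ ∀ z ∈ A, ψ z v = 1) → ∑ z : A, ψ (z : V n) v = 0 := by
    intro v hv
    push_neg at hv
    obtain ⟨z₀, hz₀, hne⟩ := hv
    have hz₀v : ψ z₀ v = -1 := (hpm z₀ hz₀ v).resolve_left hne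
    set z₀' : A := ⟨z₀, hz₀⟩ with hz₀'
    have hre : ∑ z : A, ψ (z : V n) v = ∑ z : A, ψ ((z + z₀' : A) : V n) v :=
      (Equiv.sum_comp (Equiv.addRight z₀') (fun z : A => ψ (z : V n) v)).symm
    have hstep : ∑ z : A, ψ ((z + z₀' : A) : V n) v = (∑ z : A, ψ (z : V n) v) * (-1) := by
      rw [Finset.sum_mul]
      apply Finset.sum_congr rfl
      intro z _
      have hco : ((z + z₀' : A) : V n) = (z : V n) + z₀ := rfl
      rw [hco, hhom _ z.2 _ hz₀ v, hz₀v]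
    have h2 := hre.trans hstep
    have h3 : (2:ℂ) * (∑ z : A, ψ (z : V n) v) = 0 := by linear_combination h2
    have := mul_eq_zero.1 h3
    simpa using this
  have hfval : ∀ v, (∀ z ∈ A, ψ z v = 1) → ∑ z : A, ψ (z : V n) v = (2:ℂ)^k := by
    intro v hv
    calc ∑ z : A, ψ (z : V n) v = ∑ _z : A, (1:ℂ) :=
          Finset.sum_congr rfl (fun (z : A) _ => hv z z.2)
      _ = (2:ℂ)^k := by simp [Finset.card_univ, hcardA]
  set F : Finset (V n) := Finset.univ.filter (fun v => supportLE v a) with hF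
  have hinner : ∀ z ∈ A, ∑ v ∈ F, (-Complex.I) ^ wH v * (-1:ℂ) ^ e z v
      = (1 - Complex.I) ^ wH a * Complex.I ^ wH z := by
    intro z hz
    set g : Fin n → ZMod 2 → ℂ := fun j x =>
      if a j = 0 ∧ x = 1 then 0 else (-Complex.I) ^ x.val * (-1:ℂ) ^ ((z j).val * x.val) with hg
    have hzero : ∀ j, a j = 0 → g j 1 = 0 := by intro j hj; simp [hg, hj]
    have hprod : ∀ v ∈ F, ∏ j, g j (v j) = (-Complex.I) ^ wH v * (-1:ℂ) ^ e z v := by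
      intro v hvF
      have hvs : supportLE v a := by
        rw [hF] at hvF
        simpa using hvF
      have hgv : ∀ j, g j (v j) = (-Complex.I) ^ (v j).val * (-1:ℂ) ^ ((z j).val * (v j).val) := by
        intro j
        rw [hg]
        simp only
        rw [if_neg]
        rintro ⟨hj0, hj1⟩
        rw [hvs j hj1] at hj0
        exact absurd hj0 (by decide)
      rw [Finset.prod_congr rfl (fun j _ => hgv j), Finset.prod_mul_distrib,
          Finset.prod_pow_eq_pow_sum, Finset.prod_pow_eq_pow_sum, ← wH_eq_sum, he]
    have hfactor : ∀ j, g j 0 + g j 1 = (1 - Complex.I) ^ (a j).val * Complex.I ^ (z j).val := by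
      intro j
      have hza : z j = 1 → a j = 1 := hsupp z hz j
      have h01 : ∀ x : ZMod 2, x = 0 ∨ x = 1 := by decide
      rcases h01 (a j) with ha | ha
      · have hzj : z j = 0 := by
          rcases h01 (z j) with h | h
          · exact h
          · exact absurd (hza h) (by rw [ha]; decide)
        rw [hg]; simp [ha, hzj]
      · rcases h01 (z j) with hzj | hzj
        · rw [hg]
          simp only [ha, hzj]
          norm_num [ZMod.val_zero, ZMod.val_one]
          ring
        · rw [hg]
          simp only [ha, hzj]
          norm_num [ZMod.val_zero, ZMod.val_one]
          linear_combination Complex.I_sq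
    calc ∑ v ∈ F, (-Complex.I) ^ wH v * (-1:ℂ) ^ e z v
        = ∑ v ∈ F, ∏ j, g j (v j) := (Finset.sum_congr rfl hprod).symm
      _ = ∏ j, (g j 0 + g j 1) := by rw [hF]; exact sum_prod_support a g hzero
      _ = ∏ j, ((1 - Complex.I) ^ (a j).val * Complex.I ^ (z j).val) :=
          Finset.prod_congr rfl (fun j _ => hfactor j)
      _ = (1 - Complex.I) ^ wH a * Complex.I ^ wH z := by
          rw [Finset.prod_mul_distrib, Finset.prod_pow_eq_pow_sum,
            Finset.prod_pow_eq_pow_sum, ← wH_eq_sum, ← wH_eq_sum]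
  have hinner0 : ∀ z ∈ A, ∑ v ∈ F, ((-1:ℂ)) ^ e z v
      = (if z = 0 then ((2:ℂ)) ^ wH a else 0) := by
    intro z hz
    set g : Fin n → ZMod 2 → ℂ := fun j x =>
      if a j = 0 ∧ x = 1 then 0 else (-1:ℂ) ^ ((z j).val * x.val) with hg
    have hzero : ∀ j, a j = 0 → g j 1 = 0 := by intro j hj; simp [hg, hj]
    have hprod : ∀ v ∈ F, ∏ j, g j (v j) = ((-1:ℂ)) ^ e z v := by
      intro v hvF
      have hvs : supportLE v a := by
        rw [hF] at hvF
        simpa using hvF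
      have hgv : ∀ j, g j (v j) = (-1:ℂ) ^ ((z j).val * (v j).val) := by
        intro j
        rw [hg]
        simp only
        rw [if_neg]
        rintro ⟨hj0, hj1⟩
        rw [hvs j hj1] at hj0
        exact absurd hj0 (by decide)
      rw [Finset.prod_congr rfl (fun j _ => hgv j), Finset.prod_pow_eq_pow_sum, he]
    have hkey : ∑ v ∈ F, ((-1:ℂ)) ^ e z v = ∏ j, (g j 0 + g j 1) := by
      rw [← Finset.sum_congr rfl hprod, hF]
      exact sum_prod_support a g hzero
    by_cases hz0 : z = 0
    · subst hz0
      rw [if_pos rfl, hkey]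
      have : ∀ j, g j 0 + g j 1 = ((2:ℂ)) ^ (a j).val := by
        intro j
        have h01 : ∀ x : ZMod 2, x = 0 ∨ x = 1 := by decide
        rcases h01 (a j) with ha | ha <;>
          simp [hg, ha, ZMod.val_zero, ZMod.val_one] <;> norm_num
      rw [Finset.prod_congr rfl (fun j _ => this j), Finset.prod_pow_eq_pow_sum, ← wH_eq_sum]
    · rw [if_neg hz0, hkey]
      have : ∃ j, z j = 1 := by
        by_contra hc
        push_neg at hc
        apply hz0
        funext j
        have h01 : ∀ x : ZMod 2, x = 0 ∨ x = 1 := by decide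
        rcases h01 (z j) with h | h
        · exact h
        · exact absurd h (hc j)
      obtain ⟨j₀, hj₀⟩ := this
      apply Finset.prod_eq_zero (Finset.mem_univ j₀)
      have ha : a j₀ = 1 := hsupp z hz j₀ hj₀
      simp [hg, ha, hj₀, ZMod.val_zero, ZMod.val_one]
  set Valid : V n → Prop := fun v => ∀ z ∈ A, ψ z v = 1 with hV
  set f : V n → ℂ := fun v => ∑ z : A, ψ (z : V n) v with hf
  have hfv : ∀ v, f v = if Valid v then ((2:ℂ))^k else 0 := by
    intro v
    by_cases h : Valid v
    · rw [if_pos h]; exact hfval v h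
    · rw [if_neg h]; exact hsum0 v h
  set FV : Finset (V n) := F.filter Valid with hFV
  -- swap lemma
  have hswap : ∀ (c : V n → ℂ), ∑ v ∈ F, c v * f v = ∑ z : A, ∑ v ∈ F, c v * ψ (z : V n) v := by
    intro c
    simp only [hf, Finset.mul_sum]
    exact Finset.sum_comm
  -- evaluation of D
  have hD1 : ∑ v ∈ F, (-Complex.I) ^ wH v * f v = (2:ℂ)^k * ∑ v ∈ FV, (-Complex.I) ^ wH v := by
    rw [Finset.mul_sum, hFV]
    conv_rhs => rw [Finset.sum_filter]
    apply Finset.sum_congr rfl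
    intro v _
    rw [hfv v]
    by_cases h : Valid v
    · rw [if_pos h, if_pos h]; ring
    · rw [if_neg h, if_neg h]; ring
  have hD2 : ∑ v ∈ F, (-Complex.I) ^ wH v * f v = (2:ℂ)^k * (1 - Complex.I) ^ wH a := by
    rw [hswap]
    have hzeval : ∀ z : A, ∑ v ∈ F, (-Complex.I) ^ wH v * ψ (z : V n) v
        = (1 - Complex.I) ^ wH a := by
      intro z
      have hstep : ∑ v ∈ F, (-Complex.I) ^ wH v * ψ (z : V n) v
          = Complex.I ^ wH (z : V n) * ∑ v ∈ F, (-Complex.I) ^ wH v * (-1:ℂ) ^ e (z : V n) v := by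
        rw [Finset.mul_sum]
        apply Finset.sum_congr rfl
        intro v _
        rw [hψ]
        simp only
        ring
      rw [hstep, hinner _ z.2]
      have hu := hIsq (wH (z : V n)) (heven _ z.2)
      calc Complex.I ^ wH (z : V n) * ((1 - Complex.I) ^ wH a * Complex.I ^ wH (z : V n))
          = (1 - Complex.I) ^ wH a * (Complex.I ^ wH (z : V n) * Complex.I ^ wH (z : V n)) := by
            ring
        _ = (1 - Complex.I) ^ wH a := by rw [hu, mul_one]
    calc ∑ z : A, ∑ v ∈ F, (-Complex.I) ^ wH v * ψ (z : V n) v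
        = ∑ _z : A, (1 - Complex.I) ^ wH a := Finset.sum_congr rfl (fun z _ => hzeval z)
      _ = (2:ℂ)^k * (1 - Complex.I) ^ wH a := by
          rw [Finset.sum_const, Finset.card_univ, hcardA]
          simp [nsmul_eq_mul]
  -- counting
  have hN1 : ∑ v ∈ F, (1:ℂ) * f v = (2:ℂ)^k * (FV.card : ℂ) := by
    rw [hFV]
    have : ∑ v ∈ F, (1:ℂ) * f v = ∑ v ∈ F, if Valid v then ((2:ℂ))^k else 0 := by
      apply Finset.sum_congr rfl
      intro v _
      rw [one_mul, hfv v]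
    rw [this, ← Finset.sum_filter, Finset.sum_const]
    simp [mul_comm]
  have hN2 : ∑ v ∈ F, (1:ℂ) * f v = (2:ℂ) ^ wH a := by
    rw [hswap]
    have hzeval : ∀ z : A, ∑ v ∈ F, (1:ℂ) * ψ (z : V n) v
        = Complex.I ^ wH (z : V n) * (if (z : V n) = 0 then ((2:ℂ)) ^ wH a else 0) := by
      intro z
      rw [← hinner0 _ z.2, Finset.mul_sum]
      apply Finset.sum_congr rfl
      intro v _
      rw [hψ]
      simp only
      ring
    rw [Finset.sum_congr rfl (fun z _ => hzeval z)]
    rw [Fintype.sum_eq_single (0 : A)]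
    · simp [wH_zero]
    · intro z hzne
      have : (z : V n) ≠ 0 := by
        intro hc
        apply hzne
        exact Subtype.ext hc
      rw [if_neg this, mul_zero]
  have hcardFV : ((FV.card : ℂ)) = (2:ℂ)^k := by
    have h2k : ((2:ℂ)) ^ wH a = (2:ℂ)^k * (2:ℂ)^k := by
      rw [← pow_add, ← hdim]
      ring_nf
    have := hN1.symm.trans (hN2.trans h2k)
    exact mul_left_cancel₀ (pow_ne_zero _ two_ne_zero) this
  -- the sum over valid v's
  have hsumFV : ∑ v ∈ FV, (-Complex.I) ^ wH v = (2:ℂ)^k * (-Complex.I) ^ k := by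
    have h1 := hD1.symm.trans hD2
    have h2 : (1 - Complex.I) ^ wH a = (2:ℂ)^k * (-Complex.I) ^ k := by
      have hsq : (1 - Complex.I) ^ 2 = 2 * (-Complex.I) := by
        linear_combination Complex.I_sq
      rw [← hdim, mul_comm 2 k, pow_mul', hsq, mul_pow]
    rw [h2] at h1
    exact mul_left_cancel₀ (pow_ne_zero _ two_ne_zero) h1
  -- triangle equality
  have habs : ∀ (m : ℕ), ‖(-Complex.I) ^ m * Complex.I ^ k‖ = 1 := by
    intro m
    rw [norm_mul, norm_pow, norm_pow]
    have h1 : ‖(-Complex.I)‖ = 1 := by simp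
    rw [h1, Complex.norm_I, one_pow, one_pow, mul_one]
  have hsumw : ∑ v ∈ FV, (-Complex.I) ^ wH v * Complex.I ^ k = (FV.card : ℂ) := by
    rw [← Finset.sum_mul, hsumFV, hcardFV, mul_assoc, ← mul_pow]
    have : (-Complex.I) * Complex.I = 1 := by
      rw [neg_mul, Complex.I_mul_I, neg_neg]
    rw [this, one_pow, mul_one]
  have hre1 : ∑ v ∈ FV, (1 - ((-Complex.I) ^ wH v * Complex.I ^ k).re) = 0 := by
    rw [Finset.sum_sub_distrib, ← Complex.re_sum, hsumw]
    simp
  have hnonneg : ∀ v ∈ FV, 0 ≤ 1 - ((-Complex.I) ^ wH v * Complex.I ^ k).re := by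
    intro v _
    have h := Complex.re_le_norm ((-Complex.I) ^ wH v * Complex.I ^ k)
    rw [habs] at h
    linarith
  have hall := (Finset.sum_eq_zero_iff_of_nonneg hnonneg).1 hre1
  -- membership of a * u
  have hmem : a * u ∈ FV := by
    rw [hFV, hF]
    simp only [Finset.mem_filter, Finset.mem_univ, true_and]
    constructor
    · intro j hj
      have hmul1 : ∀ x y : ZMod 2, x * y = 1 → x = 1 := by decide
      exact hmul1 _ _ hj
    · rw [hV]
      intro z hz
      have hexp : e z (a * u) = e z u := by
        rw [he]
        simp only
        apply Finset.sum_congr rfl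
        intro j _
        have hza : z j = 1 → a j = 1 := hsupp z hz j
        have h01 : ∀ x : ZMod 2, x = 0 ∨ x = 1 := by decide
        rcases h01 (z j) with h | h
        · simp [h, ZMod.val_zero]
        · rw [Pi.mul_apply, hza h, one_mul]
      rw [hψ]
      simp only
      rw [hexp]
      exact hval z hz
  have h1re := hall _ hmem
  set w : ℂ := (-Complex.I) ^ wH (a * u) * Complex.I ^ k with hw
  have hwre : w.re = 1 := by
    rw [hw]
    linarith [h1re]
  have hwabs := habs (wH (a * u))
  have hwim : w.im = 0 := by
    have h := Complex.sq_norm w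
    rw [hw] at h ⊢
    rw [hwabs] at h
    have hnsq : Complex.normSq ((-Complex.I) ^ wH (a * u) * Complex.I ^ k)
        = (((-Complex.I) ^ wH (a * u) * Complex.I ^ k).re) ^ 2
          + (((-Complex.I) ^ wH (a * u) * Complex.I ^ k).im) ^ 2 := by
      rw [Complex.normSq_apply]; ring
    rw [hnsq] at h
    rw [hw] at hwre
    nlinarith [h, hwre]
  have hw1 : w = 1 := by
    apply Complex.ext
    · rw [hwre]; rfl
    · rw [hwim]; rfl
  calc (-Complex.I) ^ wH (a * u)
      = (-Complex.I) ^ wH (a * u) * (Complex.I ^ k * (-Complex.I) ^ k) := by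
        rw [← mul_pow]
        have : Complex.I * (-Complex.I) = 1 := by
          rw [mul_neg, Complex.I_mul_I, neg_neg]
        rw [this, one_pow, mul_one]
    _ = w * (-Complex.I) ^ k := by rw [hw]; ring
    _ = (-Complex.I) ^ k := by rw [hw1, one_mul]

-- ## matrix helpers

lemma I_pow_even_sq {w : ℕ} (hw : Even w) : Complex.I ^ w * Complex.I ^ w = 1 := by
  obtain ⟨m, hm⟩ := hw
  rw [← pow_add, hm]
  have : m + m + (m + m) = 4 * m := by ring
  rw [this, pow_mul]
  norm_num [pow_succ, Complex.I_sq]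

lemma pauliE_zero_diag {n : ℕ} (z : V n) :
    PauliE (0 : V n) z
      = Matrix.diagonal (fun v : V n => (-1:ℂ) ^ (∑ j, (z j).val * (v j).val)) := by
  ext u v
  rw [PauliE, Matrix.of_apply, Matrix.diagonal]
  have h0 : ∑ j, ((0 : V n) j).val * ((z j).val) = 0 := by
    apply Finset.sum_eq_zero
    intro j _
    simp [ZMod.val_zero]
  rw [h0, pow_zero, one_mul]
  by_cases h : u = v
  · simp [h]
  · have : ¬ (u = v + 0) := by simpa using h
    simp [Matrix.of_apply, h, this]

lemma mul_sum_self {n : ℕ} (S : Finset (Matrix (V n) (V n) ℂ))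
    (hclosed : ∀ g ∈ S, ∀ h ∈ S, g * h ∈ S) {h : Matrix (V n) (V n) ℂ}
    (hh : h ∈ S) (hinv : h * h = 1) : h * (∑ g ∈ S, g) = ∑ g ∈ S, g := by
  rw [Finset.mul_sum]
  apply Finset.sum_nbij' (i := fun g => h * g) (j := fun g => h * g)
  · intro g hg; exact hclosed h hh g hg
  · intro g hg; exact hclosed h hh g hg
  · intro g _; rw [← mul_assoc, hinv, one_mul]
  · intro g _; rw [← mul_assoc, hinv, one_mul]
  · intro g _; rfl

lemma hz_invol {n : ℕ} (z : V n) (hz : Even (wH z)) :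
    (Complex.I ^ wH z • PauliE (0 : V n) z) * (Complex.I ^ wH z • PauliE (0 : V n) z) = 1 := by
  rw [pauliE_zero_diag, Matrix.smul_mul, Matrix.mul_smul, Matrix.diagonal_mul_diagonal]
  rw [smul_smul, I_pow_even_sq hz]
  have : (fun v : V n => (-1:ℂ) ^ (∑ j, (z j).val * (v j).val)
      * (-1:ℂ) ^ (∑ j, (z j).val * (v j).val)) = fun _ => 1 := by
    funext v
    rw [← pow_add, ← two_mul, pow_mul]
    norm_num
  rw [this, one_smul, Matrix.diagonal_one]

lemma zadd_self (x : ZMod 2) : x + x = 0 := by revert x; decide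

end Aux

/-- (Converse direction.) If every element `ε_j E(a_j,b_j)` of a stabilizer
group `S` with `2^r` elements has even `w_H(a_j)`, and for every element with `a_j ≠ 0`
there is a linear subspace `A_j` of dimension `w_H(a_j)/2`, supported on `a_j`,
self-orthogonal, with `i^{w_H(z)} E(0,z) ∈ S` for every `z ∈ A_j`, then
`T^{⊗n} Π_S (T^{⊗n})† = Π_S`, i.e. transversal `T` preserves the code space. -/
theorem stabilizer_transversalT_sufficient (n r : ℕ)
    (S : Finset (Matrix (V n) (V n) ℂ))
    (hS : IsStabilizer n S) (hcard : S.card = 2 ^ r)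
    (h1 : ∀ (a b : V n) (ε : ℂ), IsSign ε → ε • PauliE a b ∈ S → Even (wH a))
    (h2 : ∀ (a b : V n) (ε : ℂ), IsSign ε → ε • PauliE a b ∈ S → a ≠ 0 →
      ∃ A : Submodule (ZMod 2) (V n),
        2 * Module.finrank (ZMod 2) A = wH a ∧
        (∀ z ∈ A, supportLE z a) ∧
        (∀ y ∈ A, ∀ z ∈ A, binInner y z = 0) ∧
        (∀ z ∈ A, (Complex.I ^ wH z) • PauliE 0 z ∈ S)) :
    transT n * stabProj S * (transT n)ᴴ = stabProj S := by
  classical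
  obtain ⟨hne, hdec, hclosed, hcomm, hnegI⟩ := hS
  set ω : ℂ := Complex.exp ((Real.pi : ℂ) * Complex.I / 4) with hω
  have hωconj : ω * (starRingEnd ℂ) ω = 1 := by
    rw [hω, ← Complex.exp_conj, ← Complex.exp_add]
    have hc : (Real.pi : ℂ) * Complex.I / 4
        + (starRingEnd ℂ) ((Real.pi : ℂ) * Complex.I / 4) = 0 := by
      rw [map_div₀, _root_.map_mul, Complex.conj_I, Complex.conj_ofReal]
      have h4 : (starRingEnd ℂ) 4 = 4 := by
        rw [show (4:ℂ) = ((4:ℝ):ℂ) by norm_num, Complex.conj_ofReal]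
      rw [h4]
      ring
    rw [hc, Complex.exp_zero]
  have hω2 : ω ^ 2 = Complex.I := by
    rw [hω, ← Complex.exp_nat_mul]
    rw [show ((2:ℕ):ℂ) * ((Real.pi : ℂ) * Complex.I / 4)
        = ((Real.pi / 2 : ℝ) : ℂ) * Complex.I by push_cast; ring]
    rw [Complex.exp_mul_I, ← Complex.ofReal_cos, ← Complex.ofReal_sin,
      Real.cos_pi_div_two, Real.sin_pi_div_two]
    simp
  set P : Matrix (V n) (V n) ℂ := ∑ g ∈ S, g with hP
  have main : ∀ u v : V n, ω ^ wH u * P u v * (starRingEnd ℂ) ω ^ wH v = P u v := by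
    intro u v
    by_cases hPuv : P u v = 0
    · rw [hPuv]; ring
    have hex : ∃ g ∈ S, g u v ≠ 0 := by
      by_contra hc
      push_neg at hc
      apply hPuv
      rw [hP, Matrix.sum_apply]
      exact Finset.sum_eq_zero hc
    obtain ⟨g, hgS, hguv⟩ := hex
    obtain ⟨ε, a, b, hsign, hgeq⟩ := hdec g hgS
    have huva : u = v + a := by
      by_contra hne'
      apply hguv
      rw [hgeq, Matrix.smul_apply, PauliE, Matrix.of_apply, if_neg hne']
      simp
    have haa : a + a = 0 := funext fun j => zadd_self (a j)
    have hvua : v = u + a := by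
      rw [huva, add_assoc, haa, add_zero]
    by_cases ha0 : a = 0
    · have huv : v = u := by rw [hvua, ha0, add_zero]
      rw [huv]
      calc ω ^ wH u * P u u * (starRingEnd ℂ) ω ^ wH u
          = (ω * (starRingEnd ℂ) ω) ^ wH u * P u u := by rw [mul_pow]; ring
        _ = P u u := by rw [hωconj, one_pow, one_mul]
    · have hgS' : ε • PauliE a b ∈ S := by rw [← hgeq]; exact hgS
      obtain ⟨A, hdim, hsuppA, horthA, hmemA⟩ := h2 a b ε hsign hgS' ha0
      have hval : ∀ z ∈ A,
          Complex.I ^ wH z * (-1:ℂ) ^ (∑ j, (z j).val * (u j).val) = 1 := by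
        intro z hz
        have hzS := hmemA z hz
        have hzeven : Even (wH z) := even_wH_of_self (horthA z hz z hz)
        have hmulP : (Complex.I ^ wH z • PauliE (0 : V n) z) * P = P := by
          rw [hP]
          exact mul_sum_self S hclosed hzS (hz_invol z hzeven)
        have hent := congrFun (congrFun hmulP u) v
        rw [pauliE_zero_diag, Matrix.smul_mul, Matrix.smul_apply,
          Matrix.diagonal_mul, smul_eq_mul] at hent
        have hent' : (Complex.I ^ wH z * (-1:ℂ) ^ (∑ j, (z j).val * (u j).val)) * P u v
            = 1 * P u v := by
          rw [one_mul]
          conv_rhs => rw [← hent]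
          ring
        exact mul_right_cancel₀ hPuv hent'
      have hcore := core a u A hdim hsuppA horthA hval
      set k := Module.finrank (ZMod 2) A with hk
      have hid : wH v + 2 * wH (a * u) = wH u + 2 * k := by
        have h1' := wH_add_identity u a
        have hau : u * a = a * u := mul_comm u a
        rw [hau, ← hvua] at h1'
        omega
      have hconj : Complex.I ^ wH (a * u) = Complex.I ^ k := by
        have hcc := congrArg (starRingEnd ℂ) hcore
        simpa [map_pow, Complex.conj_I] using hcc
      have hfin : ω ^ wH u = ω ^ wH v := by
        have e1 : ω ^ (wH v + 2 * wH (a * u)) = ω ^ (wH u + 2 * k) := by rw [hid]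
        rw [pow_add, pow_add, pow_mul, pow_mul, hω2, hconj] at e1
        exact (mul_right_cancel₀ (pow_ne_zero _ Complex.I_ne_zero) e1).symm
      calc ω ^ wH u * P u v * (starRingEnd ℂ) ω ^ wH v
          = ω ^ wH v * P u v * (starRingEnd ℂ) ω ^ wH v := by rw [hfin]
        _ = (ω * (starRingEnd ℂ) ω) ^ wH v * P u v := by rw [mul_pow]; ring
        _ = P u v := by rw [hωconj, one_pow, one_mul]
  ext u v
  have hT : transT n = Matrix.diagonal (fun w : V n => ω ^ wH w) := rfl
  rw [hT, Matrix.diagonal_conjTranspose, Matrix.mul_diagonal, Matrix.diagonal_mul]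
  rw [stabProj, Matrix.smul_apply, smul_eq_mul, ← hP]
  have hstar : (star fun w : V n => ω ^ wH w) v = (starRingEnd ℂ) ω ^ wH v := by
    rw [Pi.star_apply, star_pow, Complex.star_def]
  rw [hstar]
  calc ω ^ wH u * ((S.card : ℂ)⁻¹ * P u v) * (starRingEnd ℂ) ω ^ wH v
      = (S.card : ℂ)⁻¹ * (ω ^ wH u * P u v * (starRingEnd ℂ) ω ^ wH v) := by ring
    _ = (S.card : ℂ)⁻¹ * P u v := by rw [main u v]
end

section
/- Let x ∈ F_2^n and let C_x ⊆ F_2^n be a binary linear code with dim C_x = w_H(x)/2 such that every z ∈ C_x satisfies z ⪯ x and y z^T = 0 for all y, z ∈ C_x (a self-dual code supported on x). Then x ∈ C_x. Consequently, for any CSS-T pair (C1, C2) one has C2 ⊆ C1^⊥. -/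
open Matrix BigOperators

section MyAux

variable {ι : Type*} [Fintype ι] [DecidableEq ι]

lemma zmod2_cases (a : ZMod 2) : a = 0 ∨ a = 1 := by
  fin_cases a
  · exact Or.inl rfl
  · exact Or.inr rfl

lemma binInner_comm (x y : ι → ZMod 2) : binInner x y = binInner y x := by
  simp [binInner, mul_comm]

lemma binInner_self (y : ι → ZMod 2) : binInner y y = ((wH y : ℕ) : ZMod 2) := by
  have h1 : binInner y y = ∑ j ∈ Finset.univ.filter (fun j => y j = 1), y j * y j := by
    rw [binInner, Finset.sum_filter_of_ne]
    intro j _ h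
    rcases zmod2_cases (y j) with h1 | h1
    · exfalso; rw [h1, mul_zero] at h; exact h rfl
    · exact h1
  have h2 : ∑ j ∈ Finset.univ.filter (fun j => y j = 1), y j * y j
      = ∑ _j ∈ Finset.univ.filter (fun j => y j = 1), (1 : ZMod 2) :=
    Finset.sum_congr rfl (fun j hj => by
      rw [(Finset.mem_filter.mp hj).2]; ring)
  rw [h1, h2, Finset.sum_const, wH, nsmul_eq_mul, mul_one]

def suppSub (x : ι → ZMod 2) : Submodule (ZMod 2) (ι → ZMod 2) where
  carrier := {y | supportLE y x}
  add_mem' := by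
    intro a b ha hb j h
    rcases zmod2_cases (a j) with h1 | h1
    · rcases zmod2_cases (b j) with h2 | h2
      · rw [Pi.add_apply, h1, h2] at h; simp at h
      · exact hb j h2
    · exact ha j h1
  zero_mem' := by intro j h; simp at h
  smul_mem' := by
    intro c a ha j h
    rcases zmod2_cases c with h1 | h1
    · rw [Pi.smul_apply, h1, zero_smul] at h; simp at h
    · rw [Pi.smul_apply, h1, one_smul] at h; exact ha j h

lemma mem_suppSub {x y : ι → ZMod 2} : y ∈ suppSub x ↔ supportLE y x := Iff.rfl

/-- The support subspace has dimension `wH x`. -/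
noncomputable def suppEquiv (x : ι → ZMod 2) :
    suppSub x ≃ₗ[ZMod 2] ({j // x j = 1} → ZMod 2) where
  toFun y := fun j => y.1 j.1
  map_add' := fun a b => rfl
  map_smul' := fun c a => rfl
  invFun f := ⟨fun j => if h : x j = 1 then f ⟨j, h⟩ else 0, by
    intro j hj
    by_cases h : x j = 1
    · exact h
    · simp [h] at hj⟩
  left_inv := by
    rintro ⟨y, hy⟩
    ext j
    by_cases h : x j = 1
    · simp [h]
    · simp only [h, dif_neg, not_false_iff]
      rcases zmod2_cases (y j) with h1 | h1
      · exact h1.symm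
      · exact absurd (hy j h1) h
  right_inv := by
    intro f
    ext ⟨j, hj⟩
    simp [hj]

lemma finrank_suppSub (x : ι → ZMod 2) :
    Module.finrank (ZMod 2) (suppSub x) = wH x := by
  rw [(suppEquiv x).finrank_eq, Module.finrank_pi, Fintype.card_subtype]
  rfl







/-- The dot-product bilinear form on `ι → ZMod 2`. -/
noncomputable def dotForm : LinearMap.BilinForm (ZMod 2) (ι → ZMod 2) :=
  LinearMap.mk₂ (ZMod 2) binInner
    (fun a b c => by
      simp only [binInner, Pi.add_apply, add_mul, Finset.sum_add_distrib])
    (fun c a b => by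
      simp only [binInner, Pi.smul_apply, smul_eq_mul, Finset.mul_sum]
      exact Finset.sum_congr rfl fun j _ => by ring)
    (fun a b c => by
      simp only [binInner, Pi.add_apply, mul_add, Finset.sum_add_distrib])
    (fun c a b => by
      simp only [binInner, Pi.smul_apply, smul_eq_mul, Finset.mul_sum]
      exact Finset.sum_congr rfl fun j _ => by ring)

lemma dotForm_apply (a b : ι → ZMod 2) : dotForm a b = binInner a b := rfl

lemma dotForm_isRefl : (dotForm (ι := ι)).IsRefl := by
  intro a b h
  rwa [dotForm_apply, binInner_comm] at h

lemma binInner_single (y : ι → ZMod 2) (j : ι) :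
    binInner y (Pi.single j 1) = y j := by
  rw [binInner]
  rw [Finset.sum_eq_single j
    (fun k _ hk => by rw [Pi.single_eq_of_ne hk, mul_zero])
    (fun h => absurd (Finset.mem_univ j) h)]
  rw [Pi.single_eq_same, mul_one]

lemma restrict_nondeg (x : ι → ZMod 2) :
    (dotForm.restrict (suppSub x)).Nondegenerate := by
  have hr : (dotForm.restrict (suppSub x)).IsRefl := fun a b h => (binInner_comm b.1 a.1).trans h
  refine (LinearMap.IsRefl.nondegenerate_iff_separatingLeft hr).mpr ?_
  intro m hm
  apply Subtype.ext
  funext j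
  show m.1 j = 0
  rcases zmod2_cases (m.1 j) with h1 | h1
  · exact h1
  · exfalso
    have hxj : x j = 1 := m.2 j h1
    have hp : Pi.single j 1 ∈ suppSub x := by
      intro k hk
      by_cases hkj : k = j
      · rwa [hkj]
      · rw [Pi.single_eq_of_ne hkj] at hk; simp at hk
    have := hm ⟨Pi.single j 1, hp⟩
    rw [LinearMap.BilinForm.restrict_apply] at this
    simp only [LinearMap.domRestrict_apply] at this
    rw [dotForm_apply, binInner_single, h1] at this
    simp at this







lemma binInner_add_left (a b c : ι → ZMod 2) :
    binInner (a + b) c = binInner a c + binInner b c := by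
  simp [binInner, add_mul, Finset.sum_add_distrib]

lemma binInner_add_right (a b c : ι → ZMod 2) :
    binInner a (b + c) = binInner a b + binInner a c := by
  simp [binInner, mul_add, Finset.sum_add_distrib]

lemma binInner_smul_left (c : ZMod 2) (a b : ι → ZMod 2) :
    binInner (c • a) b = c * binInner a b := by
  simp only [binInner, Pi.smul_apply, smul_eq_mul, Finset.mul_sum]
  exact Finset.sum_congr rfl fun j _ => by ring

lemma binInner_smul_right (c : ZMod 2) (a b : ι → ZMod 2) :
    binInner a (c • b) = c * binInner a b := by
  simp only [binInner, Pi.smul_apply, smul_eq_mul, Finset.mul_sum]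
  exact Finset.sum_congr rfl fun j _ => by ring

lemma restrict_dotForm_apply (x : ι → ZMod 2) (a b : suppSub x) :
    dotForm.restrict (suppSub x) a b = binInner a.1 b.1 := rfl

lemma restrict_dotForm_isRefl (x : ι → ZMod 2) :
    (dotForm.restrict (suppSub x)).IsRefl := by
  intro a b h
  rw [restrict_dotForm_apply] at h ⊢
  rwa [binInner_comm]

set_option synthInstance.maxHeartbeats 1000000 in
set_option maxHeartbeats 1000000 in
lemma selfdual_supported_mem (x : ι → ZMod 2) (Cx : Submodule (ZMod 2) (ι → ZMod 2))
    (hdim : 2 * Module.finrank (ZMod 2) Cx = wH x)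
    (hsupp : ∀ z ∈ Cx, supportLE z x)
    (horth : ∀ y ∈ Cx, ∀ z ∈ Cx, binInner y z = 0) : x ∈ Cx := by
  classical
  set D := Cx ⊔ Submodule.span (ZMod 2) {x} with hD
  have hxx : binInner x x = 0 := by
    rw [binInner_self, ← hdim, Nat.cast_mul]
    have h2 : ((2 : ℕ) : ZMod 2) = 0 := by decide
    rw [h2, zero_mul]
  have hxz : ∀ z ∈ Cx, binInner x z = 0 := by
    intro z hz
    have h1 : binInner x z = binInner z z := by
      refine Finset.sum_congr rfl fun j _ => ?_
      rcases zmod2_cases (z j) with h | h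
      · rw [h, mul_zero, mul_zero]
      · rw [h, hsupp z hz j h]
    rw [h1]; exact horth z hz z hz
  have hDorth : ∀ y ∈ D, ∀ z ∈ D, binInner y z = 0 := by
    intro y hy z hz
    obtain ⟨a, ha, w, hw, rfl⟩ := Submodule.mem_sup.mp hy
    obtain ⟨b, hb, v, hv, rfl⟩ := Submodule.mem_sup.mp hz
    obtain ⟨c, rfl⟩ := Submodule.mem_span_singleton.mp hw
    obtain ⟨d, rfl⟩ := Submodule.mem_span_singleton.mp hv
    have hax : binInner a x = 0 := by rw [binInner_comm]; exact hxz a ha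
    rw [binInner_add_left, binInner_add_right, binInner_add_right,
      binInner_smul_left, binInner_smul_left, binInner_smul_right,
      binInner_smul_right, horth a ha b hb, hax, hxz b hb, hxx]
    ring
  have hDS : D ≤ suppSub x := by
    apply sup_le
    · intro z hz; exact hsupp z hz
    · rw [Submodule.span_le]
      rintro z hz
      rw [Set.mem_singleton_iff] at hz
      subst hz
      intro j h
      exact h
  set D' := D.comap (suppSub x).subtype with hD'
  have hfr : Module.finrank (ZMod 2) D' = Module.finrank (ZMod 2) D :=
    (Submodule.comapSubtypeEquivOfLe hDS).finrank_eq
  have hle : D' ≤ (dotForm.restrict (suppSub x)).orthogonal D' := by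
    intro m hm
    rw [LinearMap.BilinForm.mem_orthogonal_iff]
    intro p hp
    show dotForm.restrict (suppSub x) p m = 0
    rw [restrict_dotForm_apply]
    exact hDorth p.1 hp m.1 hm
  have hrank := LinearMap.BilinForm.finrank_orthogonal (restrict_nondeg x)
    D'
  have hmono : Module.finrank (ZMod 2) D' ≤
      Module.finrank (ZMod 2) ((dotForm.restrict (suppSub x)).orthogonal D') :=
    Submodule.finrank_mono hle
  have hsle : Module.finrank (ZMod 2) D' ≤ Module.finrank (ZMod 2) (suppSub x) :=
    D'.finrank_le
  have hS : Module.finrank (ZMod 2) (suppSub x) = wH x := finrank_suppSub x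
  have hfin : Module.finrank (ZMod 2) D ≤ Module.finrank (ZMod 2) Cx := by omega
  have hEq : Cx = D := Submodule.eq_of_le_of_finrank_le le_sup_left hfin
  rw [hEq]
  exact Submodule.mem_sup_right (Submodule.mem_span_singleton_self x)



end MyAux

/-- If `C_x ⊆ F₂ⁿ` is a self-dual code supported on `x` (every `z ∈ C_x`
satisfies `z ⪯ x`, all inner products vanish, and `dim C_x = w_H(x)/2`), then `x ∈ C_x`.
Consequently, for any CSS-T pair `(C₁, C₂)` one has `C₂ ⊆ C₁^⊥`. -/
theorem mem_selfdual_supported_and_csst_subset_dual (n : ℕ) :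
    (∀ (x : V n) (Cx : Submodule (ZMod 2) (V n)),
        2 * Module.finrank (ZMod 2) Cx = wH x →
        (∀ z ∈ Cx, supportLE z x) →
        (∀ y ∈ Cx, ∀ z ∈ Cx, binInner y z = 0) →
        x ∈ Cx) ∧
    (∀ C₁ C₂ : Submodule (ZMod 2) (V n), CSST C₁ C₂ → C₂ ≤ dualCode C₁) := by
  
  constructor
  · intro x Cx hdim hsupp horth
    exact selfdual_supported_mem x Cx hdim hsupp horth
  · intro C₁ C₂ hcsst x hx
    obtain ⟨hsub, heven, hex⟩ := hcsst
    obtain ⟨Cx, hCx1, hCx2, hCx3, hCx4⟩ := hex x hx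
    exact hCx1 (selfdual_supported_mem x Cx hCx2 hCx3 hCx4)
end
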